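/- Let A ∈ ℝ^{n×d}, b ∈ ℝ^n with b ≥ 0 entrywise and ‖b‖_1 ≤ 1, R > 2 with ‖A‖ ≤ R, and β ∈ (0, 0.1). Let L_exp(x) := 0.5 ‖⟨exp(Ax), 1_n⟩^{-1} exp(Ax) − b‖_2² and let H(x) := ∇²L_exp(x) be its Hessian. Then for all x, y ∈ ℝ^d with ‖x‖_2 ≤ R, ‖y‖_2 ≤ R, ‖A(x − y)‖_∞ < 0.01, ⟨exp(Ax), 1_n⟩ ≥ β, and ⟨exp(Ay), 1_n⟩ ≥ β, we have ‖H(x) − H(y)‖ ≤ β^{-2} n^{1.5} exp(20R²) · ‖x − y‖_2, where ‖·‖ on matrices is the spectral norm. -/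

import Mathlib

open Matrix

/-- The Euclidean (ℓ2) norm of a vector in ℝ^n. -/
noncomputable def l2norm {n : ℕ} (u : Fin n → ℝ) : ℝ := Real.sqrt (∑ i, u i ^ 2)

/-- The ℓ1 norm of a vector in ℝ^n. -/
noncomputable def l1norm {n : ℕ} (u : Fin n → ℝ) : ℝ := ∑ i, |u i|

/-- The supremum (ℓ∞) norm of a vector in ℝ^n. -/
noncomputable def linfNorm {n : ℕ} (u : Fin n → ℝ) : ℝ := ⨆ i, |u i|

/-- The spectral (ℓ2 operator) norm of a matrix. -/
noncomputable def specNorm {n d : ℕ} (A : Matrix (Fin n) (Fin d) ℝ) : ℝ :=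
  ‖LinearMap.toContinuousLinearMap (Matrix.toEuclideanLin A)‖

/-- The softmax function f(z) = ⟨exp(Az), 1_n⟩⁻¹ · exp(Az). -/
noncomputable def softmaxFn {n d : ℕ} (A : Matrix (Fin n) (Fin d) ℝ) (z : Fin d → ℝ) :
    Fin n → ℝ :=
  (∑ i, Real.exp (A.mulVec z i))⁻¹ • fun i => Real.exp (A.mulVec z i)

/-- The Hessian matrix of a function L : ℝ^d → ℝ, as the d × d matrix of second
partial derivatives. -/
noncomputable def hessMat {d : ℕ} (L : (Fin d → ℝ) → ℝ) (x : Fin d → ℝ) :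
    Matrix (Fin d) (Fin d) ℝ :=
  Matrix.of fun i j => fderiv ℝ (fun y => fderiv ℝ L y (Pi.single j 1)) x (Pi.single i 1)


open scoped Matrix.Norms.L2Operator
open scoped Matrix.Norms.L2Operator

lemma specNorm_eq {n d : ℕ} (A : Matrix (Fin n) (Fin d) ℝ) : specNorm A = ‖A‖ := rfl

lemma l2norm_eq {n : ℕ} (u : Fin n → ℝ) :
    l2norm u = ‖(WithLp.equiv 2 (Fin n → ℝ)).symm u‖ := by
  rw [EuclideanSpace.norm_eq]
  unfold l2norm
  congr 1
  apply Finset.sum_congr rfl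
  intro i _
  rw [Real.norm_eq_abs, sq_abs]
  rfl

lemma specNorm_nonneg {n d : ℕ} (A : Matrix (Fin n) (Fin d) ℝ) : 0 ≤ specNorm A :=
  norm_nonneg _

lemma l2norm_nonneg {n : ℕ} (u : Fin n → ℝ) : 0 ≤ l2norm u := Real.sqrt_nonneg _

lemma specNorm_mulVec_le {n d : ℕ} (A : Matrix (Fin n) (Fin d) ℝ) (v : Fin d → ℝ) :
    l2norm (A.mulVec v) ≤ specNorm A * l2norm v := by
  rw [l2norm_eq, l2norm_eq, specNorm_eq]
  exact A.l2_opNorm_mulVec ((WithLp.equiv 2 (Fin d → ℝ)).symm v)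

lemma linfNorm_le_l2norm {n : ℕ} (u : Fin n → ℝ) : linfNorm u ≤ l2norm u := by
  unfold linfNorm
  rcases Nat.eq_zero_or_pos n with h | h
  · subst h
    rw [show (⨆ i : Fin 0, |u i|) = 0 from Real.iSup_of_isEmpty _]
    exact l2norm_nonneg u
  · have : Nonempty (Fin n) := Fin.pos_iff_nonempty.mp h
    apply ciSup_le
    intro i
    rw [← Real.sqrt_sq_eq_abs]
    apply Real.sqrt_le_sqrt
    exact Finset.single_le_sum (f := fun i => u i ^ 2) (fun j _ => sq_nonneg _) (Finset.mem_univ i)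

lemma specNorm_transpose {n d : ℕ} (A : Matrix (Fin n) (Fin d) ℝ) :
    specNorm Aᵀ = specNorm A := by
  rw [specNorm_eq, specNorm_eq, ← conjTranspose_eq_transpose_of_trivial]
  exact A.l2_opNorm_conjTranspose

lemma specNorm_mul_le {n m l : ℕ} (A : Matrix (Fin n) (Fin m) ℝ) (B : Matrix (Fin m) (Fin l) ℝ) :
    specNorm (A * B) ≤ specNorm A * specNorm B := by
  rw [specNorm_eq, specNorm_eq, specNorm_eq]
  exact A.l2_opNorm_mul B

lemma specNorm_entrywise_le {n : ℕ} (M : Matrix (Fin n) (Fin n) ℝ) (c : ℝ) (hc : 0 ≤ c)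
    (h : ∀ p m, |M p m| ≤ c) : specNorm M ≤ n * c := by
  rw [specNorm_eq]
  rw [Matrix.l2_opNorm_def]
  apply ContinuousLinearMap.opNorm_le_bound _ (by positivity)
  intro x
  rw [LinearEquiv.trans_apply]
  rw [LinearMap.coe_toContinuousLinearMap']
  set y : Fin n → ℝ := WithLp.equiv 2 (Fin n → ℝ) x with hy
  have hx : x = (WithLp.equiv 2 (Fin n → ℝ)).symm y := rfl
  have h1 : Matrix.toEuclideanLin M x = (WithLp.equiv 2 (Fin n → ℝ)).symm (M.mulVec y) := rfl
  rw [h1, ← l2norm_eq, hx, ← l2norm_eq]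
  have hsum : ∀ p, (M.mulVec y p) ^ 2 ≤ c ^ 2 * ((n : ℝ) * ∑ m, y m ^ 2) := by
    intro p
    have habs : |M.mulVec y p| ≤ c * ∑ m, |y m| := by
      have : M.mulVec y p = ∑ m, M p m * y m := rfl
      rw [this]
      calc |∑ m, M p m * y m| ≤ ∑ m, |M p m * y m| := Finset.abs_sum_le_sum_abs _ _
        _ ≤ ∑ m, c * |y m| := by
            apply Finset.sum_le_sum
            intro m _
            rw [abs_mul]
            exact mul_le_mul_of_nonneg_right (h p m) (abs_nonneg _)
        _ = c * ∑ m, |y m| := by rw [Finset.mul_sum]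
    have h2 : (M.mulVec y p) ^ 2 ≤ (c * ∑ m, |y m|) ^ 2 := by
      rw [← sq_abs]
      apply pow_le_pow_left₀ (abs_nonneg _) habs
    refine h2.trans ?_
    rw [mul_pow]
    apply mul_le_mul_of_nonneg_left _ (sq_nonneg c)
    calc (∑ m, |y m|) ^ 2 ≤ (Finset.univ.card : ℝ) * ∑ m, |y m| ^ 2 :=
          sq_sum_le_card_mul_sum_sq
      _ = (n : ℝ) * ∑ m, y m ^ 2 := by simp [sq_abs]
  unfold l2norm
  have h3 : (∑ p, (M.mulVec y p) ^ 2) ≤ ((n : ℝ) * c) ^ 2 * ∑ m, y m ^ 2 := by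
    calc (∑ p, (M.mulVec y p) ^ 2) ≤ ∑ _p : Fin n, c ^ 2 * ((n : ℝ) * ∑ m, y m ^ 2) :=
          Finset.sum_le_sum (fun p _ => hsum p)
      _ = (n : ℝ) * (c ^ 2 * ((n : ℝ) * ∑ m, y m ^ 2)) := by
          rw [Finset.sum_const, Finset.card_univ, Fintype.card_fin, nsmul_eq_mul]
      _ = ((n : ℝ) * c) ^ 2 * ∑ m, y m ^ 2 := by ring
  calc Real.sqrt (∑ p, (M.mulVec y p) ^ 2) ≤
        Real.sqrt (((n : ℝ) * c) ^ 2 * ∑ m, y m ^ 2) := Real.sqrt_le_sqrt h3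
    _ = (n : ℝ) * c * Real.sqrt (∑ m, y m ^ 2) := by
        rw [Real.sqrt_mul (sq_nonneg _), Real.sqrt_sq (by positivity)]




lemma key_algebra {N : ℕ} (F c ai aj : Fin N → ℝ) (s : ℝ) :
    (∑ k, (F k * (ai k - ∑ m, F m * ai m)) * (c k * (aj k - ∑ m, F m * aj m)))
      - s * (∑ m, F m * (ai m - ∑ r, F r * ai r) * aj m)
    = ∑ p, (∑ m, ai m *
        ((if m = p then F m * c m - s * F m else 0)
          - F m * (F p * c p) - F p * (F m * c m)
          + F m * F p * (∑ r, F r * c r) + s * F m * F p)) * aj p := by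
  set qi := ∑ k, F k * ai k with hqi
  set qj := ∑ k, F k * aj k with hqj
  set W := ∑ k, F k * c k with hW
  set Pwi := ∑ k, F k * c k * ai k with hPwi
  set Pwj := ∑ k, F k * c k * aj k with hPwj
  set Paa := ∑ k, F k * c k * (ai k * aj k) with hPaa
  set P6 := ∑ k, F k * (ai k * aj k) with hP6
  have hL1 : (∑ k, (F k * (ai k - qi)) * (c k * (aj k - qj)))
      = Paa - qj * Pwi - qi * Pwj + (qi * qj) * W := by
    rw [Finset.sum_congr rfl (fun k _ => show (F k * (ai k - qi)) * (c k * (aj k - qj))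
      = F k * c k * (ai k * aj k) - qj * (F k * c k * ai k) - qi * (F k * c k * aj k)
        + (qi * qj) * (F k * c k) from by ring)]
    rw [Finset.sum_add_distrib, Finset.sum_sub_distrib, Finset.sum_sub_distrib,
      ← Finset.mul_sum, ← Finset.mul_sum, ← Finset.mul_sum]
  have hL2 : (∑ m, F m * (ai m - qi) * aj m) = P6 - qi * qj := by
    rw [Finset.sum_congr rfl (fun m _ => show F m * (ai m - qi) * aj m
      = F m * (ai m * aj m) - qi * (F m * aj m) from by ring)]
    rw [Finset.sum_sub_distrib, ← Finset.mul_sum]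
  have hin : ∀ p : Fin N, (∑ m, ai m *
        ((if m = p then F m * c m - s * F m else 0)
          - F m * (F p * c p) - F p * (F m * c m)
          + F m * F p * W + s * F m * F p))
      = ai p * (F p * c p - s * F p) - (F p * c p) * qi - F p * Pwi
        + (F p * W) * qi + (s * F p) * qi := by
    intro p
    rw [Finset.sum_congr rfl (fun m _ => show ai m *
        ((if m = p then F m * c m - s * F m else 0)
          - F m * (F p * c p) - F p * (F m * c m)
          + F m * F p * W + s * F m * F p)
      = (if m = p then ai m * (F m * c m - s * F m) else 0)
        + (-((F p * c p) * (F m * ai m)) - F p * (F m * c m * ai m)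
          + ((F p * W) * (F m * ai m) + (s * F p) * (F m * ai m))) from by
        rcases eq_or_ne m p with h | h
        · simp only [if_pos h]; ring
        · simp only [if_neg h]; ring)]
    rw [Finset.sum_add_distrib, Finset.sum_ite_eq' Finset.univ p
      (fun m => ai m * (F m * c m - s * F m))]
    rw [Finset.sum_add_distrib, Finset.sum_sub_distrib, Finset.sum_add_distrib,
      Finset.sum_neg_distrib, ← Finset.mul_sum, ← Finset.mul_sum, ← Finset.mul_sum,
      ← Finset.mul_sum]
    simp only [Finset.mem_univ, if_pos]
    ring
  rw [hL1, hL2]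
  rw [Finset.sum_congr rfl (fun p _ => by rw [hin p])]
  rw [Finset.sum_congr rfl (fun p (_ : p ∈ Finset.univ) =>
    show (ai p * (F p * c p - s * F p) - (F p * c p) * qi - F p * Pwi
        + (F p * W) * qi + (s * F p) * qi) * aj p
      = F p * c p * (ai p * aj p) - s * (F p * (ai p * aj p)) - qi * (F p * c p * aj p)
        - Pwi * (F p * aj p) + ((W * qi) * (F p * aj p) + (s * qi) * (F p * aj p)) from by ring)]
  rw [Finset.sum_add_distrib, Finset.sum_sub_distrib, Finset.sum_sub_distrib,
    Finset.sum_sub_distrib, Finset.sum_add_distrib,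
    ← Finset.mul_sum, ← Finset.mul_sum, ← Finset.mul_sum, ← Finset.mul_sum, ← Finset.mul_sum]
  ring

namespace SMaux

variable {n d : ℕ} (A : Matrix (Fin n) (Fin d) ℝ) (b : Fin n → ℝ)

noncomputable def rowD (k : Fin n) : (Fin d → ℝ) →L[ℝ] ℝ :=
  (ContinuousLinearMap.proj k).comp (LinearMap.toContinuousLinearMap A.mulVecLin)

@[simp] lemma rowD_apply (k : Fin n) (v : Fin d → ℝ) : rowD A k v = A.mulVec v k := rfl

noncomputable def ff (k : Fin n) (z : Fin d → ℝ) : ℝ :=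
  Real.exp (A.mulVec z k) / ∑ i, Real.exp (A.mulVec z i)

noncomputable def Df (k : Fin n) (z : Fin d → ℝ) : (Fin d → ℝ) →L[ℝ] ℝ :=
  ff A k z • (rowD A k - ∑ m, ff A m z • rowD A m)

lemma hasFDerivAt_exp_row (k : Fin n) (z : Fin d → ℝ) :
    HasFDerivAt (fun z => Real.exp (A.mulVec z k)) (Real.exp (A.mulVec z k) • rowD A k) z :=
  (Real.hasDerivAt_exp _).comp_hasFDerivAt z ((rowD A k).hasFDerivAt)

lemma Spos (hn : 0 < n) (z : Fin d → ℝ) : 0 < ∑ i, Real.exp (A.mulVec z i) :=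
  Finset.sum_pos (fun i _ => Real.exp_pos _)
    (by simpa [Finset.univ_nonempty_iff] using Fin.pos_iff_nonempty.mp hn)

lemma hasFDerivAt_ff (hn : 0 < n) (k : Fin n) (z : Fin d → ℝ) :
    HasFDerivAt (ff A k) (Df A k z) z := by
  have hS : HasFDerivAt (fun z => ∑ i, Real.exp (A.mulVec z i))
      (∑ i, Real.exp (A.mulVec z i) • rowD A i) z :=
    HasFDerivAt.fun_sum (fun i _ => hasFDerivAt_exp_row A i z)
  have hs := (Spos A hn z).ne'
  have hInv : HasFDerivAt (fun z => (∑ i, Real.exp (A.mulVec z i))⁻¹)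
      ((-((∑ i, Real.exp (A.mulVec z i)) ^ 2)⁻¹) • (∑ i, Real.exp (A.mulVec z i) • rowD A i)) z :=
    (hasDerivAt_inv hs).comp_hasFDerivAt z hS
  have := (hasFDerivAt_exp_row A k z).mul hInv
  have h2 : HasFDerivAt (ff A k) (Real.exp (A.mulVec z k) •
        ((-((∑ i, Real.exp (A.mulVec z i)) ^ 2)⁻¹) • (∑ i, Real.exp (A.mulVec z i) • rowD A i)) +
      (∑ i, Real.exp (A.mulVec z i))⁻¹ • (Real.exp (A.mulVec z k) • rowD A k)) z := by
    rw [show ff A k = (fun z => Real.exp (A.mulVec z k)) * (fun z => (∑ i, Real.exp (A.mulVec z i))⁻¹)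
      from funext fun w => div_eq_mul_inv _ _]
    exact this
  convert h2 using 1
  ext v
  simp only [Df, ff, ContinuousLinearMap.smul_apply, ContinuousLinearMap.sub_apply,
    ContinuousLinearMap.sum_apply, ContinuousLinearMap.add_apply, ContinuousLinearMap.coe_smul',
    Pi.smul_apply, rowD_apply, smul_eq_mul]
  rw [Finset.sum_congr rfl (fun (x : Fin n) _ =>
    div_mul_eq_mul_div (Real.exp (A.mulVec z x)) (∑ i, Real.exp (A.mulVec z i)) (A.mulVec v x)),
    ← Finset.sum_div]
  field_simp
  ring


lemma Df_apply (k : Fin n) (z v : Fin d → ℝ) :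
    Df A k z v = ff A k z * (A.mulVec v k - ∑ m, ff A m z * A.mulVec v m) := by
  show (ff A k z • (rowD A k - ∑ m, ff A m z • rowD A m)) v = _
  rw [ContinuousLinearMap.smul_apply, ContinuousLinearMap.sub_apply,
    ContinuousLinearMap.sum_apply]
  simp only [ContinuousLinearMap.smul_apply, rowD_apply, smul_eq_mul]

noncomputable def Lfun (z : Fin d → ℝ) : ℝ :=
  0.5 * ∑ k, (ff A k z - b k) * (ff A k z - b k)

noncomputable def DL (z : Fin d → ℝ) : (Fin d → ℝ) →L[ℝ] ℝ :=
  ∑ k, (ff A k z - b k) • Df A k z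

lemma hasFDerivAt_L (hn : 0 < n) (z : Fin d → ℝ) :
    HasFDerivAt (Lfun A b) (DL A b z) z := by
  have h : ∀ k : Fin n, HasFDerivAt (fun z => (ff A k z - b k) * (ff A k z - b k))
      ((ff A k z - b k) • Df A k z + (ff A k z - b k) • Df A k z) z := by
    intro k
    have h1 := (hasFDerivAt_ff A hn k z).sub_const (b k)
    exact h1.mul h1
  have hsum := HasFDerivAt.fun_sum (fun k (_ : k ∈ Finset.univ) => h k)
  have := hsum.const_mul (0.5 : ℝ)
  refine this.congr_fderiv ?_
  ext v
  simp only [DL, ContinuousLinearMap.sum_apply, ContinuousLinearMap.smul_apply, smul_eq_mul,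
    ContinuousLinearMap.add_apply, ContinuousLinearMap.coe_smul', Pi.smul_apply]
  rw [Finset.mul_sum]
  apply Finset.sum_congr rfl; intro k _; ring

/-- q j z = ∑ m, f m z * A m j -/
noncomputable def qq (j : Fin d) (z : Fin d → ℝ) : ℝ := ∑ m, ff A m z * A m j

lemma mulVec_single' (j : Fin d) (k : Fin n) : A.mulVec (Pi.single j 1) k = A k j := by
  rw [Matrix.mulVec_single]
  exact mul_one _

lemma fderiv_L (hn : 0 < n) (y : Fin d → ℝ) (j : Fin d) :
    fderiv ℝ (Lfun A b) y (Pi.single j 1) =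
      ∑ k, (ff A k y - b k) * (ff A k y * (A k j - qq A j y)) := by
  rw [(hasFDerivAt_L A b hn y).fderiv]
  simp only [DL, ContinuousLinearMap.sum_apply, ContinuousLinearMap.smul_apply, smul_eq_mul]
  apply Finset.sum_congr rfl; intro k _
  rw [Df_apply]
  rw [mulVec_single' A j k]
  unfold qq
  congr 2
  congr 1
  apply Finset.sum_congr rfl; intro m _; rw [mulVec_single' A j m]


noncomputable def Dq (j : Fin d) (z : Fin d → ℝ) : (Fin d → ℝ) →L[ℝ] ℝ :=
  ∑ m, A m j • Df A m z

lemma hasFDerivAt_qq (hn : 0 < n) (j : Fin d) (z : Fin d → ℝ) :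
    HasFDerivAt (qq A j) (Dq A j z) z := by
  have : ∀ m : Fin n, HasFDerivAt (fun z => ff A m z * A m j) (A m j • Df A m z) z := by
    intro m
    have h0 := (hasFDerivAt_ff A hn m z).mul_const (A m j)
    convert h0 using 2
  exact HasFDerivAt.fun_sum (fun m _ => this m)

noncomputable def Hent (x : Fin d → ℝ) (i j : Fin d) : ℝ :=
  (∑ k, (ff A k x * (A k i - qq A i x)) * ((2 * ff A k x - b k) * (A k j - qq A j x)))
  - (∑ k, (ff A k x - b k) * ff A k x) * (∑ m, ff A m x * (A m i - qq A i x) * A m j)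

lemma fderiv_inner (hn : 0 < n) (x : Fin d → ℝ) (i j : Fin d) :
    fderiv ℝ (fun y => ∑ k, (ff A k y - b k) * (ff A k y * (A k j - qq A j y))) x
      (Pi.single i 1) = Hent A b x i j := by
  have hbig : HasFDerivAt
      (fun y => ∑ k, (ff A k y - b k) * (ff A k y * (A k j - qq A j y)))
      (∑ k, ((ff A k x - b k) • (ff A k x • (-(Dq A j x)) + (A k j - qq A j x) • Df A k x)
        + (ff A k x * (A k j - qq A j x)) • Df A k x)) x := by
    apply HasFDerivAt.fun_sum
    intro k _
    have hsub : HasFDerivAt (fun y => A k j - qq A j y) (-(Dq A j x)) x :=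
      (hasFDerivAt_qq A hn j x).const_sub (A k j)
    have hinner := (hasFDerivAt_ff A hn k x).mul hsub
    exact ((hasFDerivAt_ff A hn k x).sub_const (b k)).mul hinner
  rw [hbig.fderiv]
  simp only [ContinuousLinearMap.sum_apply, ContinuousLinearMap.add_apply,
    ContinuousLinearMap.smul_apply, ContinuousLinearMap.neg_apply, smul_eq_mul]
  have hDfv : ∀ k : Fin n, Df A k x (Pi.single i 1) = ff A k x * (A k i - qq A i x) := by
    intro k
    rw [Df_apply, mulVec_single' A i k,
      show (∑ m, ff A m x * A.mulVec (Pi.single i 1) m) = qq A i x from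
        Finset.sum_congr rfl (fun m _ => by rw [mulVec_single' A i m])]
  have hDqv : Dq A j x (Pi.single i 1) = ∑ m, ff A m x * (A m i - qq A i x) * A m j := by
    unfold Dq
    rw [ContinuousLinearMap.sum_apply]
    apply Finset.sum_congr rfl; intro m _
    rw [ContinuousLinearMap.smul_apply, hDfv m, smul_eq_mul]
    ring
  simp only [hDfv, hDqv]
  unfold Hent
  rw [Finset.sum_mul, ← Finset.sum_sub_distrib]
  apply Finset.sum_congr rfl; intro k _
  ring


lemma hess_entry (hn : 0 < n) (x : Fin d → ℝ) (i j : Fin d) :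
    hessMat (Lfun A b) x i j = Hent A b x i j := by
  show fderiv ℝ (fun y => fderiv ℝ (Lfun A b) y (Pi.single j 1)) x (Pi.single i 1) = _
  rw [show (fun y => fderiv ℝ (Lfun A b) y (Pi.single j 1)) =
      (fun y => ∑ k, (ff A k y - b k) * (ff A k y * (A k j - qq A j y))) from
    funext (fun y => fderiv_L A b hn y j)]
  exact fderiv_inner A b hn x i j

/-- The middle matrix G. -/
noncomputable def Gmat (x : Fin d → ℝ) : Matrix (Fin n) (Fin n) ℝ :=
  Matrix.of fun p m =>
    (if p = m then ff A p x * (2 * ff A p x - b p)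
        - (∑ k, (ff A k x - b k) * ff A k x) * ff A p x else 0)
    - ff A p x * (ff A m x * (2 * ff A m x - b m))
    - ff A m x * (ff A p x * (2 * ff A p x - b p))
    + ff A p x * ff A m x * (∑ r, ff A r x * (2 * ff A r x - b r))
    + (∑ k, (ff A k x - b k) * ff A k x) * ff A p x * ff A m x

lemma hess_factor (hn : 0 < n) (x : Fin d → ℝ) :
    hessMat (Lfun A b) x = Aᵀ * Gmat A b x * A := by
  ext i j
  rw [hess_entry A b hn x i j]
  have hR : (Aᵀ * Gmat A b x * A) i j = ∑ p, (∑ m, A m i *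
        ((if m = p then ff A m x * (2 * ff A m x - b m)
            - (∑ k, (ff A k x - b k) * ff A k x) * ff A m x else 0)
          - ff A m x * (ff A p x * (2 * ff A p x - b p))
          - ff A p x * (ff A m x * (2 * ff A m x - b m))
          + ff A m x * ff A p x * (∑ r, ff A r x * (2 * ff A r x - b r))
          + (∑ k, (ff A k x - b k) * ff A k x) * ff A m x * ff A p x)) * A p j := by
    simp only [Matrix.mul_apply, Matrix.transpose_apply, Gmat, Matrix.of_apply]
  rw [hR]
  unfold Hent qq
  exact key_algebra (fun k => ff A k x) (fun k => 2 * ff A k x - b k)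
    (fun k => A k i) (fun k => A k j) (∑ k, (ff A k x - b k) * ff A k x)


lemma ff_nonneg (k : Fin n) (z : Fin d → ℝ) : 0 ≤ ff A k z :=
  div_nonneg (Real.exp_pos _).le (Finset.sum_nonneg (fun i _ => (Real.exp_pos _).le))

lemma ff_le_one (k : Fin n) (z : Fin d → ℝ) : ff A k z ≤ 1 := by
  have hpos := Spos A k.pos z
  rw [ff, div_le_one hpos]
  exact Finset.single_le_sum (f := fun i => Real.exp (A.mulVec z i))
    (fun i _ => (Real.exp_pos _).le) (Finset.mem_univ k)

lemma sum_ff (hn : 0 < n) (z : Fin d → ℝ) : ∑ k, ff A k z = 1 := by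
  unfold ff
  rw [← Finset.sum_div, div_self (Spos A hn z).ne']

lemma ff_sub_le (x y : Fin d → ℝ) (t : ℝ) (ht0 : 0 ≤ t)
    (hcoord : ∀ k, |A.mulVec x k - A.mulVec y k| ≤ t) (k : Fin n) :
    ff A k x - ff A k y ≤ 2 * t * ff A k x := by
  have hSu := Spos A k.pos x
  have hSv := Spos A k.pos y
  have hcc : Real.exp (A.mulVec x k) * Real.exp (-t) ≤ Real.exp (A.mulVec y k) := by
    rw [← Real.exp_add]
    apply Real.exp_le_exp.2
    have := (abs_le.1 (hcoord k)).2
    linarith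
  have hSu' : (∑ i, Real.exp (A.mulVec y i)) * Real.exp (-t) ≤ ∑ i, Real.exp (A.mulVec x i) := by
    rw [Finset.sum_mul]
    apply Finset.sum_le_sum
    intro i _
    rw [← Real.exp_add]
    apply Real.exp_le_exp.2
    have := (abs_le.1 (hcoord i)).1
    linarith
  have he2t : 1 - 2 * t ≤ Real.exp (-t) * Real.exp (-t) := by
    rw [← Real.exp_add]
    have := Real.add_one_le_exp (-t + -t)
    linarith
  have hprod : Real.exp (A.mulVec x k) * (∑ i, Real.exp (A.mulVec y i)) * (1 - 2 * t)
      ≤ Real.exp (A.mulVec y k) * ∑ i, Real.exp (A.mulVec x i) := by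
    have h1 : Real.exp (A.mulVec x k) * (∑ i, Real.exp (A.mulVec y i)) * (1 - 2 * t)
        ≤ Real.exp (A.mulVec x k) * (∑ i, Real.exp (A.mulVec y i))
          * (Real.exp (-t) * Real.exp (-t)) := by
      apply mul_le_mul_of_nonneg_left he2t (by positivity)
    refine h1.trans ?_
    have h2 : Real.exp (A.mulVec x k) * (∑ i, Real.exp (A.mulVec y i))
          * (Real.exp (-t) * Real.exp (-t))
        = (Real.exp (A.mulVec x k) * Real.exp (-t))
          * ((∑ i, Real.exp (A.mulVec y i)) * Real.exp (-t)) := by ring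
    rw [h2]
    exact mul_le_mul hcc hSu' (by positivity) (Real.exp_pos _).le
  rw [ff, ff, div_sub_div _ _ hSu.ne' hSv.ne', div_le_iff₀ (by positivity)]
  have heq : 2 * t * (Real.exp (A.mulVec x k) / ∑ i, Real.exp (A.mulVec x i))
      * ((∑ i, Real.exp (A.mulVec x i)) * ∑ i, Real.exp (A.mulVec y i))
      = 2 * t * Real.exp (A.mulVec x k) * ∑ i, Real.exp (A.mulVec y i) := by
    field_simp
  rw [heq]
  nlinarith [hprod]


lemma abs_ff_sub (x y : Fin d → ℝ) (t : ℝ) (ht0 : 0 ≤ t)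
    (hcoord : ∀ k, |A.mulVec x k - A.mulVec y k| ≤ t) (k : Fin n) :
    |ff A k x - ff A k y| ≤ 2 * t * (ff A k x + ff A k y) := by
  have h1 := ff_sub_le A x y t ht0 hcoord k
  have h2 := ff_sub_le A y x t ht0 (fun k => by rw [abs_sub_comm]; exact hcoord k) k
  have h3 := ff_nonneg A k x
  have h4 := ff_nonneg A k y
  rw [abs_le]
  constructor <;> nlinarith

lemma sum_abs_ff_sub (hn : 0 < n) (x y : Fin d → ℝ) (t : ℝ) (ht0 : 0 ≤ t)
    (hcoord : ∀ k, |A.mulVec x k - A.mulVec y k| ≤ t) :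
    ∑ k, |ff A k x - ff A k y| ≤ 4 * t := by
  calc ∑ k, |ff A k x - ff A k y| ≤ ∑ k, 2 * t * (ff A k x + ff A k y) :=
        Finset.sum_le_sum (fun k _ => abs_ff_sub A x y t ht0 hcoord k)
    _ = 2 * t * ((∑ k, ff A k x) + ∑ k, ff A k y) := by
        rw [← Finset.mul_sum, Finset.sum_add_distrib]
    _ = 4 * t := by rw [sum_ff A hn x, sum_ff A hn y]; ring

lemma prod_lip (a1 a2 b1 b2 : ℝ) :
    |a1 * b1 - a2 * b2| ≤ |a1 - a2| * |b1| + |a2| * |b1 - b2| := by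
  have h : a1 * b1 - a2 * b2 = (a1 - a2) * b1 + a2 * (b1 - b2) := by ring
  rw [h]
  refine (abs_add_le _ _).trans ?_
  rw [abs_mul, abs_mul]

lemma Gmat_entry_lip (hn : 0 < n) (x y : Fin d → ℝ) (t : ℝ) (ht0 : 0 ≤ t)
    (hcoord : ∀ k, |A.mulVec x k - A.mulVec y k| ≤ t)
    (hb0 : ∀ i, 0 ≤ b i) (hb1 : ∀ i, b i ≤ 1) (p m : Fin n) :
    |Gmat A b x p m - Gmat A b y p m| ≤ 200 * t := by
  have hF0x := ff_nonneg A (z := x)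
  have hF0y := ff_nonneg A (z := y)
  have hF1x := ff_le_one A (z := x)
  have hF1y := ff_le_one A (z := y)
  have hDk : ∀ k, |ff A k x - ff A k y| ≤ 4 * t := by
    intro k
    refine (abs_ff_sub A x y t ht0 hcoord k).trans ?_
    nlinarith [hF1x k, hF1y k, hF0x k, hF0y k]
  have hSum := sum_abs_ff_sub A hn x y t ht0 hcoord
  -- w bounds
  have hwabs : ∀ k (z : Fin d → ℝ), |ff A k z * (2 * ff A k z - b k)| ≤ 2 := by
    intro k z
    rw [abs_mul]
    have h1 : |ff A k z| ≤ 1 := by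
      rw [abs_of_nonneg (ff_nonneg A k z)]; exact ff_le_one A k z
    have h2 : |2 * ff A k z - b k| ≤ 2 := by
      rw [abs_le]
      constructor <;> nlinarith [ff_nonneg A k z, ff_le_one A k z, hb0 k, hb1 k]
    nlinarith [abs_nonneg (ff A k z), abs_nonneg (2 * ff A k z - b k)]
  have hwlip : ∀ k, |ff A k x * (2 * ff A k x - b k) - ff A k y * (2 * ff A k y - b k)|
      ≤ 5 * |ff A k x - ff A k y| := by
    intro k
    have h : ff A k x * (2 * ff A k x - b k) - ff A k y * (2 * ff A k y - b k)
        = (ff A k x - ff A k y) * (2 * ff A k x + 2 * ff A k y - b k) := by ring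
    rw [h, abs_mul]
    have h2 : |2 * ff A k x + 2 * ff A k y - b k| ≤ 5 := by
      rw [abs_le]
      constructor <;> nlinarith [hF0x k, hF0y k, hF1x k, hF1y k, hb0 k, hb1 k]
    nlinarith [abs_nonneg (ff A k x - ff A k y)]
  have hWlip : |(∑ r, ff A r x * (2 * ff A r x - b r)) - ∑ r, ff A r y * (2 * ff A r y - b r)|
      ≤ 20 * t := by
    rw [← Finset.sum_sub_distrib]
    refine (Finset.abs_sum_le_sum_abs _ _).trans ?_
    calc ∑ k, |ff A k x * (2 * ff A k x - b k) - ff A k y * (2 * ff A k y - b k)|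
        ≤ ∑ k, 5 * |ff A k x - ff A k y| := Finset.sum_le_sum (fun k _ => hwlip k)
      _ = 5 * ∑ k, |ff A k x - ff A k y| := by rw [Finset.mul_sum]
      _ ≤ 5 * (4 * t) := by linarith
      _ = 20 * t := by ring
  have hWabs : ∀ z : Fin d → ℝ, |∑ r, ff A r z * (2 * ff A r z - b r)| ≤ 2 := by
    intro z
    refine (Finset.abs_sum_le_sum_abs _ _).trans ?_
    calc ∑ k, |ff A k z * (2 * ff A k z - b k)| ≤ ∑ k, 2 * ff A k z := by
          apply Finset.sum_le_sum
          intro k _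
          rw [abs_mul, abs_of_nonneg (ff_nonneg A k z)]
          have h2 : |2 * ff A k z - b k| ≤ 2 := by
            rw [abs_le]
            constructor <;> nlinarith [ff_nonneg A k z, ff_le_one A k z, hb0 k, hb1 k]
          nlinarith [ff_nonneg A k z]
      _ = 2 * ∑ k, ff A k z := by rw [Finset.mul_sum]
      _ = 2 := by rw [sum_ff A hn z]; ring
  have hslip : |(∑ k, (ff A k x - b k) * ff A k x) - ∑ k, (ff A k y - b k) * ff A k y|
      ≤ 12 * t := by
    rw [← Finset.sum_sub_distrib]
    refine (Finset.abs_sum_le_sum_abs _ _).trans ?_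
    calc ∑ k, |(ff A k x - b k) * ff A k x - (ff A k y - b k) * ff A k y|
        ≤ ∑ k, 3 * |ff A k x - ff A k y| := by
          apply Finset.sum_le_sum
          intro k _
          have h : (ff A k x - b k) * ff A k x - (ff A k y - b k) * ff A k y
              = (ff A k x - ff A k y) * (ff A k x + ff A k y - b k) := by ring
          rw [h, abs_mul]
          have h2 : |ff A k x + ff A k y - b k| ≤ 3 := by
            rw [abs_le]
            constructor <;> nlinarith [hF0x k, hF0y k, hF1x k, hF1y k, hb0 k, hb1 k]
          nlinarith [abs_nonneg (ff A k x - ff A k y)]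
      _ = 3 * ∑ k, |ff A k x - ff A k y| := by rw [Finset.mul_sum]
      _ ≤ 12 * t := by linarith
  have hsabs : ∀ z : Fin d → ℝ, |∑ k, (ff A k z - b k) * ff A k z| ≤ 1 := by
    intro z
    refine (Finset.abs_sum_le_sum_abs _ _).trans ?_
    calc ∑ k, |(ff A k z - b k) * ff A k z| ≤ ∑ k, ff A k z := by
          apply Finset.sum_le_sum
          intro k _
          rw [abs_mul, abs_of_nonneg (ff_nonneg A k z)]
          have h2 : |ff A k z - b k| ≤ 1 := by
            rw [abs_le]
            constructor <;> nlinarith [ff_nonneg A k z, ff_le_one A k z, hb0 k, hb1 k]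
          nlinarith [ff_nonneg A k z]
      _ = 1 := sum_ff A hn z
  have hFabs : ∀ k (z : Fin d → ℝ), |ff A k z| ≤ 1 := by
    intro k z
    rw [abs_of_nonneg (ff_nonneg A k z)]; exact ff_le_one A k z
  have prod_lip_bound : ∀ a1 a2 b1 b2 Da Kb Ka Db : ℝ, |a1 - a2| ≤ Da → |b1| ≤ Kb →
      |a2| ≤ Ka → |b1 - b2| ≤ Db → |a1 * b1 - a2 * b2| ≤ Da * Kb + Ka * Db := by
    intro a1 a2 b1 b2 Da Kb Ka Db hDa hKb hKa hDb
    refine (prod_lip a1 a2 b1 b2).trans ?_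
    exact add_le_add (mul_le_mul hDa hKb (abs_nonneg _) ((abs_nonneg _).trans hDa))
      (mul_le_mul hKa hDb (abs_nonneg _) ((abs_nonneg _).trans hKa))
  have hpiece2 : |ff A p x * (ff A m x * (2 * ff A m x - b m))
      - ff A p y * (ff A m y * (2 * ff A m y - b m))| ≤ 28 * t := by
    have h := prod_lip_bound _ _ _ _ (4 * t) 2 1 (20 * t) (hDk p) (hwabs m x) (hFabs p y)
      ((hwlip m).trans (by linarith [hDk m]))
    linarith
  have hpiece3 : |ff A m x * (ff A p x * (2 * ff A p x - b p))
      - ff A m y * (ff A p y * (2 * ff A p y - b p))| ≤ 28 * t := by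
    have h := prod_lip_bound _ _ _ _ (4 * t) 2 1 (20 * t) (hDk m) (hwabs p x) (hFabs m y)
      ((hwlip p).trans (by linarith [hDk p]))
    linarith
  have hWx2 : |ff A m x * (∑ r, ff A r x * (2 * ff A r x - b r))| ≤ 2 := by
    rw [abs_mul]
    have h1 := hFabs m x
    have h2 := hWabs x
    nlinarith [abs_nonneg (ff A m x), abs_nonneg (∑ r, ff A r x * (2 * ff A r x - b r))]
  have hinner4 : |ff A m x * (∑ r, ff A r x * (2 * ff A r x - b r))
      - ff A m y * (∑ r, ff A r y * (2 * ff A r y - b r))| ≤ 28 * t := by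
    have h := prod_lip_bound _ _ _ _ (4 * t) 2 1 (20 * t) (hDk m) (hWabs x) (hFabs m y) hWlip
    linarith
  have hpiece4 : |ff A p x * ff A m x * (∑ r, ff A r x * (2 * ff A r x - b r))
      - ff A p y * ff A m y * (∑ r, ff A r y * (2 * ff A r y - b r))| ≤ 36 * t := by
    have hre : ff A p x * ff A m x * (∑ r, ff A r x * (2 * ff A r x - b r))
        - ff A p y * ff A m y * (∑ r, ff A r y * (2 * ff A r y - b r))
        = ff A p x * (ff A m x * (∑ r, ff A r x * (2 * ff A r x - b r)))
        - ff A p y * (ff A m y * (∑ r, ff A r y * (2 * ff A r y - b r))) := by ring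
    rw [hre]
    have h := prod_lip_bound _ _ _ _ (4 * t) 2 1 (28 * t) (hDk p) hWx2 (hFabs p y) hinner4
    linarith
  have hFFx : |ff A p x * ff A m x| ≤ 1 := by
    rw [abs_mul]
    have h1 := hFabs p x
    have h2 := hFabs m x
    nlinarith [abs_nonneg (ff A p x), abs_nonneg (ff A m x)]
  have hFFlip : |ff A p x * ff A m x - ff A p y * ff A m y| ≤ 8 * t := by
    have h := prod_lip_bound _ _ _ _ (4 * t) 1 1 (4 * t) (hDk p) (hFabs m x) (hFabs p y) (hDk m)
    linarith
  have hpiece5 : |(∑ k, (ff A k x - b k) * ff A k x) * ff A p x * ff A m x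
      - (∑ k, (ff A k y - b k) * ff A k y) * ff A p y * ff A m y| ≤ 20 * t := by
    have hre : (∑ k, (ff A k x - b k) * ff A k x) * ff A p x * ff A m x
        - (∑ k, (ff A k y - b k) * ff A k y) * ff A p y * ff A m y
        = (∑ k, (ff A k x - b k) * ff A k x) * (ff A p x * ff A m x)
        - (∑ k, (ff A k y - b k) * ff A k y) * (ff A p y * ff A m y) := by ring
    rw [hre]
    have h := prod_lip_bound _ _ _ _ (12 * t) 1 1 (8 * t) hslip hFFx (hsabs y) hFFlip
    linarith
  have hsFlip : |(∑ k, (ff A k x - b k) * ff A k x) * ff A p x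
      - (∑ k, (ff A k y - b k) * ff A k y) * ff A p y| ≤ 16 * t := by
    have h := prod_lip_bound _ _ _ _ (12 * t) 1 1 (4 * t) hslip (hFabs p x) (hsabs y) (hDk p)
    linarith
  have hpiece1 : |(if p = m then ff A p x * (2 * ff A p x - b p)
        - (∑ k, (ff A k x - b k) * ff A k x) * ff A p x else 0)
      - (if p = m then ff A p y * (2 * ff A p y - b p)
        - (∑ k, (ff A k y - b k) * ff A k y) * ff A p y else 0)| ≤ 40 * t := by
    by_cases hpm : p = m
    · simp only [if_pos hpm]
      have hre : ff A p x * (2 * ff A p x - b p) - (∑ k, (ff A k x - b k) * ff A k x) * ff A p x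
          - (ff A p y * (2 * ff A p y - b p) - (∑ k, (ff A k y - b k) * ff A k y) * ff A p y)
          = (ff A p x * (2 * ff A p x - b p) - ff A p y * (2 * ff A p y - b p))
            - ((∑ k, (ff A k x - b k) * ff A k x) * ff A p x
              - (∑ k, (ff A k y - b k) * ff A k y) * ff A p y) := by ring
      rw [hre]
      refine (abs_sub _ _).trans ?_
      have h1 : |ff A p x * (2 * ff A p x - b p) - ff A p y * (2 * ff A p y - b p)| ≤ 20 * t :=
        (hwlip p).trans (by linarith [hDk p])
      linarith [hsFlip]
    · simp only [if_neg hpm, sub_zero, abs_zero]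
      linarith
  have hG : Gmat A b x p m - Gmat A b y p m
      = ((if p = m then ff A p x * (2 * ff A p x - b p)
          - (∑ k, (ff A k x - b k) * ff A k x) * ff A p x else 0)
        - (if p = m then ff A p y * (2 * ff A p y - b p)
          - (∑ k, (ff A k y - b k) * ff A k y) * ff A p y else 0))
      - (ff A p x * (ff A m x * (2 * ff A m x - b m))
        - ff A p y * (ff A m y * (2 * ff A m y - b m)))
      - (ff A m x * (ff A p x * (2 * ff A p x - b p))
        - ff A m y * (ff A p y * (2 * ff A p y - b p)))
      + (ff A p x * ff A m x * (∑ r, ff A r x * (2 * ff A r x - b r))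
        - ff A p y * ff A m y * (∑ r, ff A r y * (2 * ff A r y - b r)))
      + ((∑ k, (ff A k x - b k) * ff A k x) * ff A p x * ff A m x
        - (∑ k, (ff A k y - b k) * ff A k y) * ff A p y * ff A m y) := by
    simp only [Gmat, Matrix.of_apply]
    ring
  rw [hG]
  set D1 := (if p = m then ff A p x * (2 * ff A p x - b p)
          - (∑ k, (ff A k x - b k) * ff A k x) * ff A p x else 0)
      - (if p = m then ff A p y * (2 * ff A p y - b p)
          - (∑ k, (ff A k y - b k) * ff A k y) * ff A p y else 0) with hD1
  set D2 := ff A p x * (ff A m x * (2 * ff A m x - b m))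
        - ff A p y * (ff A m y * (2 * ff A m y - b m)) with hD2
  set D3 := ff A m x * (ff A p x * (2 * ff A p x - b p))
        - ff A m y * (ff A p y * (2 * ff A p y - b p)) with hD3
  set D4 := ff A p x * ff A m x * (∑ r, ff A r x * (2 * ff A r x - b r))
        - ff A p y * ff A m y * (∑ r, ff A r y * (2 * ff A r y - b r)) with hD4
  set D5 := (∑ k, (ff A k x - b k) * ff A k x) * ff A p x * ff A m x
        - (∑ k, (ff A k y - b k) * ff A k y) * ff A p y * ff A m y with hD5
  have t1 : |D1 - D2 - D3 + D4 + D5| ≤ |D1 - D2 - D3 + D4| + |D5| := abs_add_le _ _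
  have t2 : |D1 - D2 - D3 + D4| ≤ |D1 - D2 - D3| + |D4| := abs_add_le _ _
  have t3 : |D1 - D2 - D3| ≤ |D1 - D2| + |D3| := abs_sub _ _
  have t4 : |D1 - D2| ≤ |D1| + |D2| := abs_sub _ _
  linarith

end SMaux

/-- The Hessian H of L_exp is Lipschitz:
‖H(x) − H(y)‖ ≤ β⁻² n^{1.5} exp(20R²) ‖x − y‖₂. -/
theorem stmt_18 {n d : ℕ} (A : Matrix (Fin n) (Fin d) ℝ) (b : Fin n → ℝ)
    (hb0 : ∀ i, 0 ≤ b i) (hb1 : l1norm b ≤ 1)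
    (R : ℝ) (hR : 2 < R) (hA : specNorm A ≤ R)
    (β : ℝ) (hβ0 : 0 < β) (hβ1 : β < 0.1) :
    ∀ x y : Fin d → ℝ, l2norm x ≤ R → l2norm y ≤ R →
      linfNorm (A.mulVec (x - y)) < 0.01 →
      β ≤ ∑ i, Real.exp (A.mulVec x i) → β ≤ ∑ i, Real.exp (A.mulVec y i) →
      specNorm
          (hessMat (fun z => 0.5 * (l2norm (softmaxFn A z - b)) ^ 2) x
            - hessMat (fun z => 0.5 * (l2norm (softmaxFn A z - b)) ^ 2) y) ≤
        (β ^ 2)⁻¹ * (n : ℝ) ^ ((3 : ℝ) / 2) * Real.exp (20 * R ^ 2) * l2norm (x - y) := by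
  intro x y hx hy hlinf hbx hby
  rcases Nat.eq_zero_or_pos n with hn0 | hn
  · exfalso
    subst hn0
    simp only [Finset.univ_eq_empty, Finset.sum_empty] at hbx
    linarith
  -- the function equals Lfun
  have hLeq : (fun z => 0.5 * (l2norm (softmaxFn A z - b)) ^ 2) = SMaux.Lfun A b := by
    funext z
    unfold SMaux.Lfun
    have h1 : (l2norm (softmaxFn A z - b)) ^ 2 = ∑ k, (softmaxFn A z k - b k) ^ 2 := by
      rw [l2norm, Real.sq_sqrt (Finset.sum_nonneg (fun k _ => sq_nonneg _))]
      apply Finset.sum_congr rfl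
      intro k _
      rfl
    rw [h1]
    congr 1
    apply Finset.sum_congr rfl
    intro k _
    have h2 : softmaxFn A z k = SMaux.ff A k z := by
      unfold softmaxFn SMaux.ff
      simp only [Pi.smul_apply, smul_eq_mul]
      rw [div_eq_inv_mul]
    rw [h2, sq]
  rw [hLeq]
  -- factor the Hessians
  rw [SMaux.hess_factor A b hn x, SMaux.hess_factor A b hn y]
  have hsub : Aᵀ * SMaux.Gmat A b x * A - Aᵀ * SMaux.Gmat A b y * A
      = Aᵀ * (SMaux.Gmat A b x - SMaux.Gmat A b y) * A := by
    rw [Matrix.mul_sub, Matrix.sub_mul]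
  rw [hsub]
  -- setup
  set t := linfNorm (A.mulVec (x - y)) with hts
  have ht0 : 0 ≤ t := Real.iSup_nonneg (fun i => abs_nonneg _)
  have hcoord : ∀ k, |A.mulVec x k - A.mulVec y k| ≤ t := by
    intro k
    have h1 : A.mulVec x k - A.mulVec y k = A.mulVec (x - y) k := by
      rw [Matrix.mulVec_sub]
      rfl
    rw [h1, hts]
    exact le_ciSup (f := fun i => |A.mulVec (x - y) i|)
      (Set.Finite.bddAbove (Set.finite_range _)) k
  have hb1' : ∀ i, b i ≤ 1 := by
    intro i
    calc b i ≤ |b i| := le_abs_self _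
      _ ≤ ∑ j, |b j| := Finset.single_le_sum (f := fun j => |b j|)
          (fun j _ => abs_nonneg _) (Finset.mem_univ i)
      _ ≤ 1 := hb1
  -- entrywise bound on ΔG
  have hent : ∀ p m, |(SMaux.Gmat A b x - SMaux.Gmat A b y) p m| ≤ 200 * t := by
    intro p m
    have h1 : (SMaux.Gmat A b x - SMaux.Gmat A b y) p m
        = SMaux.Gmat A b x p m - SMaux.Gmat A b y p m := rfl
    rw [h1]
    exact SMaux.Gmat_entry_lip A b hn x y t ht0 hcoord hb0 hb1' p m
  have hGnorm : specNorm (SMaux.Gmat A b x - SMaux.Gmat A b y) ≤ (n : ℝ) * (200 * t) :=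
    specNorm_entrywise_le _ _ (by positivity) hent
  have hR0 : (0 : ℝ) < R := by linarith
  -- operator norm chain
  have hchain : specNorm (Aᵀ * (SMaux.Gmat A b x - SMaux.Gmat A b y) * A)
      ≤ R * ((n : ℝ) * (200 * t)) * R := by
    calc specNorm (Aᵀ * (SMaux.Gmat A b x - SMaux.Gmat A b y) * A)
        ≤ specNorm (Aᵀ * (SMaux.Gmat A b x - SMaux.Gmat A b y)) * specNorm A :=
          specNorm_mul_le _ _
      _ ≤ specNorm Aᵀ * specNorm (SMaux.Gmat A b x - SMaux.Gmat A b y) * specNorm A := by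
          apply mul_le_mul_of_nonneg_right (specNorm_mul_le _ _) (specNorm_nonneg _)
      _ ≤ R * ((n : ℝ) * (200 * t)) * R := by
          rw [specNorm_transpose]
          apply mul_le_mul
          · exact mul_le_mul hA hGnorm (specNorm_nonneg _) hR0.le
          · exact hA
          · exact specNorm_nonneg _
          · positivity
  refine hchain.trans ?_
  -- t ≤ R * ‖x - y‖₂
  have hL0 : 0 ≤ l2norm (x - y) := l2norm_nonneg _
  have htR : t ≤ R * l2norm (x - y) := by
    calc t ≤ l2norm (A.mulVec (x - y)) := linfNorm_le_l2norm _
      _ ≤ specNorm A * l2norm (x - y) := specNorm_mulVec_le A _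
      _ ≤ R * l2norm (x - y) := mul_le_mul_of_nonneg_right hA hL0
  -- numeric facts
  have hn1 : (1 : ℝ) ≤ (n : ℝ) := by exact_mod_cast hn
  have hc2 : (n : ℝ) ≤ (n : ℝ) ^ ((3 : ℝ) / 2) := by
    calc (n : ℝ) = (n : ℝ) ^ (1 : ℝ) := (Real.rpow_one _).symm
      _ ≤ (n : ℝ) ^ ((3 : ℝ) / 2) :=
        Real.rpow_le_rpow_of_exponent_le hn1 (by norm_num)
  have hc3 : (100 : ℝ) ≤ (β ^ 2)⁻¹ := by
    rw [le_inv_comm₀ (by norm_num) (by positivity)]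
    nlinarith
  have hc1 : 200 * R ^ 3 ≤ 100 * Real.exp (20 * R ^ 2) := by
    have h1 : R ≤ Real.exp R := by linarith [Real.add_one_le_exp R]
    have h2 : R ^ 3 ≤ Real.exp R ^ 3 := by
      apply pow_le_pow_left₀ hR0.le h1
    have h3 : Real.exp R ^ 3 = Real.exp (3 * R) := by
      rw [← Real.exp_nat_mul]
      norm_num
    have h4 : Real.exp (1 + 3 * R) ≤ Real.exp (20 * R ^ 2) := by
      apply Real.exp_le_exp.2
      nlinarith
    have h5 : (2 : ℝ) ≤ Real.exp 1 := by linarith [Real.add_one_le_exp 1]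
    have h6 : Real.exp (1 + 3 * R) = Real.exp 1 * Real.exp (3 * R) := Real.exp_add _ _
    nlinarith [Real.exp_pos (3 * R), Real.exp_pos (20 * R ^ 2)]
  -- final combination
  have hexp0 : (0 : ℝ) < Real.exp (20 * R ^ 2) := Real.exp_pos _
  calc R * ((n : ℝ) * (200 * t)) * R ≤ R * ((n : ℝ) * (200 * (R * l2norm (x - y)))) * R := by
        apply mul_le_mul_of_nonneg_right _ hR0.le
        apply mul_le_mul_of_nonneg_left _ hR0.le
        apply mul_le_mul_of_nonneg_left _ (by positivity)
        apply mul_le_mul_of_nonneg_left htR (by norm_num)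
    _ = (200 * R ^ 3) * (n : ℝ) * l2norm (x - y) := by ring
    _ ≤ (100 * Real.exp (20 * R ^ 2)) * ((n : ℝ) ^ ((3 : ℝ) / 2)) * l2norm (x - y) := by
        apply mul_le_mul_of_nonneg_right _ hL0
        apply mul_le_mul hc1 hc2 (by positivity) (by positivity)
    _ ≤ (β ^ 2)⁻¹ * (n : ℝ) ^ ((3 : ℝ) / 2) * Real.exp (20 * R ^ 2) * l2norm (x - y) := by
        apply mul_le_mul_of_nonneg_right _ hL0
        have hnp : (0 : ℝ) < (n : ℝ) ^ ((3 : ℝ) / 2) := by positivity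
        calc 100 * Real.exp (20 * R ^ 2) * ((n : ℝ) ^ ((3 : ℝ) / 2))
            ≤ (β ^ 2)⁻¹ * Real.exp (20 * R ^ 2) * ((n : ℝ) ^ ((3 : ℝ) / 2)) := by
              apply mul_le_mul_of_nonneg_right _ hnp.le
              exact mul_le_mul_of_nonneg_right hc3 hexp0.le
          _ = (β ^ 2)⁻¹ * (n : ℝ) ^ ((3 : ℝ) / 2) * Real.exp (20 * R ^ 2) := by ring
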